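/- Let A and B be self-adjoint operators on a finite-dimensional complex inner product space (or bounded self-adjoint operators with trace-class exponentials). Define the Gibbs expectation ⟨X⟩_C = trace(X e^{C}) / trace(e^{C}). Then ⟨A - B⟩_B ≤ log trace(e^A) − log trace(e^B) ≤ ⟨A - B⟩_A. -/

import Mathlib

open Matrix

noncomputable section BogoAux

open scoped ComplexConjugate

variable {n : ℕ}

private lemma jensen_exp {ι : Type*} [Fintype ι] (w x : ι → ℝ)
    (hw : ∀ i, 0 ≤ w i) (h1 : ∑ i, w i = 1) :
    Real.exp (∑ i, w i * x i) ≤ ∑ i, w i * Real.exp (x i) := by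
  have := convexOn_exp.map_sum_le (t := Finset.univ) (w := w) (p := x)
    (fun i _ => hw i) h1 (fun i _ => Set.mem_univ _)
  simpa [smul_eq_mul] using this

private lemma exp_unitary_conj (V A : Matrix (Fin n) (Fin n) ℂ)
    (hV : V ∈ Matrix.unitaryGroup (Fin n) ℂ) :
    NormedSpace.exp (V * A * star V) = V * NormedSpace.exp A * star V := by
  have h1 : V * star V = 1 := (Matrix.mem_unitaryGroup_iff).mp hV
  have h2 : star V * V = 1 := (Matrix.mem_unitaryGroup_iff').mp hV
  have hinv : V⁻¹ = star V := Matrix.inv_eq_left_inv h2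
  rw [← hinv, Matrix.exp_conj]
  exact ⟨⟨V, star V, h1, h2⟩, rfl⟩

private lemma exp_hermitian (M : Matrix (Fin n) (Fin n) ℂ) (hM : M.IsHermitian) :
    NormedSpace.exp M =
      (hM.eigenvectorUnitary : Matrix (Fin n) (Fin n) ℂ) *
        Matrix.diagonal (fun j => (Real.exp (hM.eigenvalues j) : ℂ)) *
        star (hM.eigenvectorUnitary : Matrix (Fin n) (Fin n) ℂ) := by
  conv_lhs => rw [hM.spectral_theorem, Unitary.conjStarAlgAut_apply]
  rw [exp_unitary_conj _ _ (hM.eigenvectorUnitary).2, Matrix.exp_diagonal]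
  congr 1
  congr 1
  funext j
  rw [Pi.exp_def]
  simp [← Complex.exp_eq_exp_ℂ, Function.comp, Complex.ofReal_exp]

private lemma conj_entry (V : Matrix (Fin n) (Fin n) ℂ) (e : Fin n → ℝ) (i : Fin n) :
    ((V * Matrix.diagonal (fun j => (e j : ℂ)) * star V) i i).re
      = ∑ j, Complex.normSq (V i j) * e j := by
  rw [Matrix.mul_apply, Complex.re_sum]
  congr 1
  funext j
  rw [Matrix.mul_diagonal, Matrix.star_apply, Complex.star_def,
    mul_comm (V i j), mul_assoc, Complex.mul_conj]
  simp [mul_comm]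

private lemma row_normSq (V : Matrix (Fin n) (Fin n) ℂ)
    (hV : V ∈ Matrix.unitaryGroup (Fin n) ℂ) (i : Fin n) :
    ∑ j, Complex.normSq (V i j) = 1 := by
  have h1 : V * star V = 1 := (Matrix.mem_unitaryGroup_iff).mp hV
  have h2 := congrFun (congrFun h1 i) i
  rw [Matrix.mul_apply, Matrix.one_apply_eq] at h2
  have h3 : ∑ j, ((Complex.normSq (V i j) : ℝ) : ℂ) = 1 := by
    rw [← h2]
    congr 1
    funext j
    rw [Matrix.star_apply, Complex.star_def, Complex.mul_conj]
  have := congrArg Complex.re h3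
  rw [Complex.re_sum] at this
  simpa using this

private lemma herm_diag (M : Matrix (Fin n) (Fin n) ℂ) (hM : M.IsHermitian) (i : Fin n) :
    M i i = ((M i i).re : ℂ) := by
  have h := congrFun (congrFun hM i) i
  rw [Matrix.conjTranspose_apply, Complex.star_def] at h
  exact (Complex.conj_eq_iff_re.mp h).symm

private lemma trace_exp (M : Matrix (Fin n) (Fin n) ℂ) (hM : M.IsHermitian) :
    (NormedSpace.exp M).trace = ((∑ i, Real.exp (hM.eigenvalues i) : ℝ) : ℂ) := by
  rw [exp_hermitian M hM, Matrix.trace_mul_cycle,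
    (Matrix.mem_unitaryGroup_iff').mp (hM.eigenvectorUnitary).2, one_mul,
    Matrix.trace_diagonal]
  push_cast
  rfl

private lemma peierls (M : Matrix (Fin n) (Fin n) ℂ) (hM : M.IsHermitian) (i : Fin n) :
    Real.exp ((M i i).re) ≤ ((NormedSpace.exp M) i i).re := by
  set V : Matrix (Fin n) (Fin n) ℂ := (hM.eigenvectorUnitary : Matrix (Fin n) (Fin n) ℂ)
  have hVmem : V ∈ Matrix.unitaryGroup (Fin n) ℂ := (hM.eigenvectorUnitary).2
  set e := hM.eigenvalues
  have hcoe : (RCLike.ofReal ∘ e : Fin n → ℂ) = fun j => (e j : ℂ) := rfl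
  have hMe : (M i i).re = ∑ j, Complex.normSq (V i j) * e j := by
    conv_lhs => rw [hM.spectral_theorem, Unitary.conjStarAlgAut_apply]
    rw [hcoe]
    exact conj_entry V e i
  have hexpe : ((NormedSpace.exp M) i i).re
      = ∑ j, Complex.normSq (V i j) * Real.exp (e j) := by
    rw [exp_hermitian M hM]
    exact conj_entry V (fun j => Real.exp (e j)) i
  rw [hMe, hexpe]
  exact jensen_exp _ _ (fun j => Complex.normSq_nonneg _) (row_normSq V hVmem i)

private lemma bogo_one (A B : Matrix (Fin n) (Fin n) ℂ)
    (hA : A.IsHermitian) (hB : B.IsHermitian) :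
    (((A - B) * NormedSpace.exp B).trace / (NormedSpace.exp B).trace).re
      ≤ Real.log ((NormedSpace.exp A).trace.re)
          - Real.log ((NormedSpace.exp B).trace.re) := by
  rcases Nat.eq_zero_or_pos n with hn | hn
  · subst hn
    simp [Matrix.trace]
  have : Nonempty (Fin n) := ⟨⟨0, hn⟩⟩
  set U : Matrix (Fin n) (Fin n) ℂ := (hB.eigenvectorUnitary : Matrix (Fin n) (Fin n) ℂ) with hUdef
  have hUmem : U ∈ Matrix.unitaryGroup (Fin n) ℂ := (hB.eigenvectorUnitary).2
  have hU1 : U * star U = 1 := (Matrix.mem_unitaryGroup_iff).mp hUmem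
  have hU2 : star U * U = 1 := (Matrix.mem_unitaryGroup_iff').mp hUmem
  set d := hB.eigenvalues with hddef
  set M : Matrix (Fin n) (Fin n) ℂ := star U * A * U with hMdef
  have hM : M.IsHermitian := by
    simp only [hMdef, Matrix.IsHermitian, Matrix.star_eq_conjTranspose,
      Matrix.conjTranspose_mul, Matrix.conjTranspose_conjTranspose, hA.eq, Matrix.mul_assoc]
  set m : Fin n → ℝ := fun i => (M i i).re with hmdef
  have hcoe : (RCLike.ofReal ∘ d : Fin n → ℂ) = fun j => (d j : ℂ) := rfl
  have hBdiag : star U * B * U = Matrix.diagonal (fun j => ((d j : ℝ) : ℂ)) := by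
    have := hB.conjStarAlgAut_star_eigenvectorUnitary
    rw [Unitary.conjStarAlgAut_star_apply] at this
    rw [← hcoe]; exact this
  set E : Matrix (Fin n) (Fin n) ℂ := Matrix.diagonal (fun i => (Real.exp (d i) : ℂ)) with hEdef
  have hexpB : NormedSpace.exp B = U * E * star U := exp_hermitian B hB
  set S : ℝ := ∑ i, (m i - d i) * Real.exp (d i) with hSdef
  set tB : ℝ := ∑ i, Real.exp (d i) with htBdef
  have htB : 0 < tB := Finset.sum_pos (fun i _ => Real.exp_pos _) Finset.univ_nonempty
  set T : ℝ := ∑ i, Real.exp (m i) with hTdef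
  have hT : 0 < T := Finset.sum_pos (fun i _ => Real.exp_pos _) Finset.univ_nonempty
  -- trace of exp B
  have htrB : (NormedSpace.exp B).trace = ((tB : ℝ) : ℂ) := trace_exp B hB
  -- numerator
  have h1 : ((A - B) * NormedSpace.exp B).trace = ((star U * (A - B) * U) * E).trace := by
    rw [hexpB, ← Matrix.mul_assoc, ← Matrix.mul_assoc, Matrix.trace_mul_comm]
    congr 1
    simp [Matrix.mul_assoc]
  have h2 : star U * (A - B) * U = M - Matrix.diagonal (fun j => ((d j : ℝ) : ℂ)) := by
    rw [Matrix.mul_sub, Matrix.sub_mul, hBdiag, hMdef]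
  have hnum : ((A - B) * NormedSpace.exp B).trace = ((S : ℝ) : ℂ) := by
    rw [h1, h2]
    simp only [Matrix.trace, Matrix.diag, hEdef, Matrix.mul_diagonal, Matrix.sub_apply,
      Matrix.diagonal_apply_eq, hSdef]
    push_cast
    refine Finset.sum_congr rfl fun i _ => ?_
    rw [herm_diag M hM i]
  -- LHS is real
  have hLHS : (((A - B) * NormedSpace.exp B).trace / (NormedSpace.exp B).trace).re
      = S / tB := by
    rw [hnum, htrB, ← Complex.ofReal_div, Complex.ofReal_re]
  rw [hLHS, htrB, Complex.ofReal_re]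
  -- trace of exp A equals trace of exp M
  have hsUmem : star U ∈ Matrix.unitaryGroup (Fin n) ℂ :=
    Matrix.mem_unitaryGroup_iff.mpr (by rw [star_star]; exact hU2)
  have hMA : NormedSpace.exp M = star U * NormedSpace.exp A * U := by
    have h := exp_unitary_conj (star U) A hsUmem
    rw [star_star] at h
    exact h
  have htrMA : (NormedSpace.exp M).trace = (NormedSpace.exp A).trace := by
    rw [hMA, Matrix.trace_mul_cycle, hU1, one_mul]
  -- Peierls: T ≤ trace exp A
  have hTle : T ≤ (NormedSpace.exp A).trace.re := by
    rw [← htrMA]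
    have : (NormedSpace.exp M).trace.re = ∑ i, ((NormedSpace.exp M) i i).re := by
      rw [Matrix.trace, Complex.re_sum]; rfl
    rw [this, hTdef]
    exact Finset.sum_le_sum fun i _ => peierls M hM i
  -- Jensen with Gibbs weights
  set p : Fin n → ℝ := fun i => Real.exp (d i) / tB with hpdef
  have hp0 : ∀ i, 0 ≤ p i := fun i => div_nonneg (Real.exp_pos _).le htB.le
  have hpsum : ∑ i, p i = 1 := by
    rw [hpdef, ← Finset.sum_div, ← htBdef, div_self htB.ne']
  have key := jensen_exp p (fun i => m i - d i) hp0 hpsum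
  have hls : ∑ i, p i * (m i - d i) = S / tB := by
    rw [hSdef, Finset.sum_div]
    refine Finset.sum_congr rfl fun i _ => ?_
    rw [hpdef]; ring
  have hrs : ∑ i, p i * Real.exp (m i - d i) = T / tB := by
    rw [hTdef, Finset.sum_div]
    refine Finset.sum_congr rfl fun i _ => ?_
    rw [hpdef, div_mul_eq_mul_div, ← Real.exp_add]
    ring_nf
  rw [hls, hrs] at key
  have h3 : S / tB ≤ Real.log (T / tB) :=
    (Real.le_log_iff_exp_le (div_pos hT htB)).mpr key
  have h4 : Real.log (T / tB) = Real.log T - Real.log tB := Real.log_div hT.ne' htB.ne'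
  have h5 : Real.log T ≤ Real.log ((NormedSpace.exp A).trace.re) := Real.log_le_log hT hTle
  linarith

end BogoAux

/-- The Bogoliubov convexity inequality for self-adjoint matrices:
`⟨A - B⟩_B ≤ log tr e^A − log tr e^B ≤ ⟨A - B⟩_A`, where `⟨X⟩_C` denotes the
Gibbs expectation `tr(X e^C)/tr(e^C)`. -/
theorem stmt_2 {n : ℕ} (A B : Matrix (Fin n) (Fin n) ℂ)
    (hA : A.IsHermitian) (hB : B.IsHermitian) :
    ((((A - B) * NormedSpace.exp B).trace / (NormedSpace.exp B).trace).re
        ≤ Real.log ((NormedSpace.exp A).trace.re)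
            - Real.log ((NormedSpace.exp B).trace.re)) ∧
    (Real.log ((NormedSpace.exp A).trace.re)
        - Real.log ((NormedSpace.exp B).trace.re)
      ≤ (((A - B) * NormedSpace.exp A).trace / (NormedSpace.exp A).trace).re) := by
  refine ⟨bogo_one A B hA hB, ?_⟩
  have h := bogo_one B A hB hA
  have hneg : ((B - A) * NormedSpace.exp A).trace
      = -(((A - B) * NormedSpace.exp A).trace) := by
    rw [show B - A = -(A - B) from (neg_sub A B).symm, Matrix.neg_mul, Matrix.trace_neg]
  rw [hneg, neg_div, Complex.neg_re] at h
  linarith
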